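/- arXiv:alg-geom/9612010 — 2 statements merged into one kernel-verified Lean document; each statement's English description precedes it below -/
import Mathlib

section
/- If c is an automorphism of a finite-dimensional vector space with characteristic polynomial φ(λ) = ∏_{m>0} (λ^m - 1)^{χ_m}, then for every k ≥ 1, the trace of c^k equals ∑_{m | k} m·χ_m. -/
open Polynomial

section Aux

lemma auxSumPowNthRoots (m k : ℕ) (hm : 0 < m) :
    ((Polynomial.nthRoots m (1:ℂ)).map (· ^ k)).sum = if m ∣ k then (m:ℂ) else 0 := by
  obtain ⟨ζ, hζ⟩ : ∃ ζ : ℂ, IsPrimitiveRoot ζ m := ⟨_, Complex.isPrimitiveRoot_exp m hm.ne'⟩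
  rw [hζ.nthRoots_eq (α := 1) (one_pow m), Multiset.map_map]
  have h1 : ((· ^ k) ∘ fun j => ζ ^ j * 1) = fun j => (ζ ^ k) ^ j := by
    funext j; simp [← pow_mul, mul_comm k j]
  rw [h1, ← Finset.range_val]
  rw [show (Multiset.map (fun j => (ζ ^ k) ^ j) (Finset.range m).val).sum
    = ∑ j ∈ Finset.range m, (ζ ^ k) ^ j from rfl]
  by_cases h : m ∣ k
  · simp [hζ.pow_eq_one_iff_dvd k |>.mpr h, h]
  · rw [geom_sum_eq (fun hx => h ((hζ.pow_eq_one_iff_dvd k).mp hx)) m,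
      ← pow_mul, mul_comm k m, pow_mul, hζ.pow_eq_one, one_pow, sub_self, zero_div, if_neg h]

lemma auxMatrixCharpolySubSmulOne {n : Type*} [DecidableEq n] [Fintype n]
    (M : Matrix n n ℂ) (μ : ℂ) :
    (M - μ • 1).charpoly = M.charpoly.comp (X + C μ) := by
  rw [comp_eq_aeval, Matrix.charpoly, Matrix.charpoly,
    AlgHom.map_det (aeval (X + C μ) : ℂ[X] →ₐ[ℂ] ℂ[X])]
  refine congrArg _ (Matrix.ext fun i j => ?_)
  by_cases hij : i = j
  · subst hij
    simp [Matrix.charmatrix_apply_eq, Matrix.sub_apply, Matrix.smul_apply, Matrix.one_apply]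
    ring
  · simp [Matrix.charmatrix_apply_ne _ _ _ hij, Matrix.sub_apply, Matrix.smul_apply,
      Matrix.one_apply_ne hij]

variable {V : Type*} [AddCommGroup V] [Module ℂ V] [Module.Finite ℂ V] [Module.Free ℂ V]

lemma auxCharpolySubAlgebraMap (f : Module.End ℂ V) (μ : ℂ) :
    (f - algebraMap ℂ (Module.End ℂ V) μ).charpoly = f.charpoly.comp (X + C μ) := by
  let b := Module.Free.chooseBasis ℂ V
  rw [← LinearMap.charpoly_toMatrix f b, ← LinearMap.charpoly_toMatrix _ b]
  have h : (LinearMap.toMatrix b b) (f - algebraMap ℂ (Module.End ℂ V) μ)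
      = LinearMap.toMatrix b b f - μ • 1 := by
    rw [map_sub]
    congr 1
    rw [Module.algebraMap_end_eq_smul_id, map_smul]
    congr 1
    exact LinearMap.toMatrix_id b
  rw [h, auxMatrixCharpolySubSmulOne]

lemma auxCountRootsCharpoly (f : Module.End ℂ V) (μ : ℂ) :
    f.charpoly.roots.count μ = Module.finrank ℂ (f.maxGenEigenspace μ) := by
  have h1 : f.maxGenEigenspace μ
      = (f - algebraMap ℂ (Module.End ℂ V) μ).maxGenEigenspace 0 := by
    ext x
    simp [Module.End.mem_maxGenEigenspace, Module.algebraMap_end_eq_smul_id,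
      Module.End.one_eq_id]
  rw [count_roots, rootMultiplicity_eq_natTrailingDegree, ← auxCharpolySubAlgebraMap,
    ← LinearMap.finrank_maxGenEigenspace_zero_eq, h1]

open Module Set in
lemma auxTraceRestrictPow (f : Module.End ℂ V) (μ : ℂ) (k : ℕ)
    (h : MapsTo (f ^ k) (f.maxGenEigenspace μ) (f.maxGenEigenspace μ)) :
    LinearMap.trace ℂ _ ((f ^ k).restrict h)
      = μ ^ k * (finrank ℂ (f.maxGenEigenspace μ) : ℂ) := by
  have hmap : ∀ x ∈ f.maxGenEigenspace μ, f x ∈ f.maxGenEigenspace μ :=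
    f.mapsTo_maxGenEigenspace_of_comm rfl μ
  have hres : (f ^ k).restrict h = (f.restrict hmap) ^ k := (Module.End.pow_restrict (f' := f) k hmap).symm
  set W := f.maxGenEigenspace μ
  set N := (f - algebraMap ℂ (Module.End ℂ V) μ).restrict
    (Module.End.mapsTo_maxGenEigenspace_of_comm (Algebra.mul_sub_algebraMap_commutes f μ) μ)
    with hNdef
  have hN : IsNilpotent N := f.isNilpotent_restrict_maxGenEigenspace_sub_algebraMap μ
  have hg : f.restrict hmap = algebraMap ℂ (Module.End ℂ W) μ + N := by
    ext x
    simp [hNdef, LinearMap.restrict_coe_apply, Module.algebraMap_end_apply]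
    erw [LinearMap.coe_restrict_apply]
    simp [Module.algebraMap_end_apply]
  have hcomm : Commute (algebraMap ℂ (Module.End ℂ W) μ) N := Algebra.commutes μ N
  rw [hres, hg, hcomm.add_pow, map_sum, Finset.sum_range_succ]
  have hzero : ∀ j ∈ Finset.range k,
      LinearMap.trace ℂ W (algebraMap ℂ (Module.End ℂ W) μ ^ j * N ^ (k - j)
        * (k.choose j : Module.End ℂ W)) = 0 := by
    intro j hj
    have hjk : j < k := Finset.mem_range.mp hj
    have hNt : IsNilpotent (N ^ (k - j)) := by
      obtain ⟨r, hr⟩ := hN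
      exact ⟨r, by rw [← pow_mul, mul_comm (k - j) r, pow_mul, hr, zero_pow (by omega)]⟩
    have h1 : algebraMap ℂ (Module.End ℂ W) μ ^ j * N ^ (k - j) * (k.choose j : Module.End ℂ W)
        = (μ ^ j * (k.choose j : ℂ)) • N ^ (k - j) := by
      rw [← map_pow, ← map_natCast (algebraMap ℂ (Module.End ℂ W)) (k.choose j), mul_assoc,
        ← Algebra.commutes ((k.choose j : ℂ)) (N ^ (k - j)), ← mul_assoc, ← map_mul,
        ← Algebra.smul_def]
    rw [h1, map_smul, smul_eq_mul,
      (LinearMap.isNilpotent_trace_of_isNilpotent hNt).eq_zero, mul_zero]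
  rw [Finset.sum_eq_zero hzero, zero_add]
  rw [Algebra.algebraMap_eq_smul_one, Nat.sub_self, pow_zero, mul_one, Nat.choose_self,
    Nat.cast_one, mul_one, _root_.smul_pow, one_pow, map_smul, LinearMap.trace_one, smul_eq_mul]

open Module Set in
lemma auxTracePowEqSumRoots (f : Module.End ℂ V) (k : ℕ) :
    LinearMap.trace ℂ V (f ^ k) = (f.charpoly.roots.map (· ^ k)).sum := by
  have hds := DirectSum.isInternal_submodule_of_iSupIndep_of_iSup_eq_top
    f.independent_maxGenEigenspace f.iSup_maxGenEigenspace_eq_top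
  have h_fin : {μ : ℂ | f.maxGenEigenspace μ ≠ ⊥}.Finite :=
    WellFoundedGT.finite_ne_bot_of_iSupIndep f.independent_maxGenEigenspace
  have hmaps : ∀ μ : ℂ, MapsTo (f ^ k) (f.maxGenEigenspace μ) (f.maxGenEigenspace μ) :=
    fun μ => f.mapsTo_maxGenEigenspace_of_comm ((Commute.refl f).pow_right k) μ
  rw [LinearMap.trace_eq_sum_trace_restrict' hds h_fin hmaps]
  have hsetseq : h_fin.toFinset = f.charpoly.roots.toFinset := by
    ext μ
    simp only [Set.Finite.mem_toFinset, Set.mem_setOf_eq, Multiset.mem_toFinset,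
      ← Multiset.count_pos, auxCountRootsCharpoly]
    rw [← Submodule.one_le_finrank_iff]
    omega
  rw [Finset.sum_congr rfl (fun μ _ => auxTraceRestrictPow f μ k (hmaps μ)), hsetseq,
    Finset.sum_multiset_map_count]
  refine Finset.sum_congr rfl fun μ _ => ?_
  rw [auxCountRootsCharpoly, nsmul_eq_mul, mul_comm]

lemma auxSumPowRootsProd (w : Finset ℕ) (hw : ∀ m ∈ w, 0 < m) (e : ℕ → ℕ) (k : ℕ) :
    (((∏ m ∈ w, ((X : ℂ[X]) ^ m - 1) ^ (e m)).roots).map (· ^ k)).sum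
      = ∑ m ∈ w, (e m : ℂ) * (if m ∣ k then (m : ℂ) else 0) := by
  have hX : ∀ m ∈ w, ((X : ℂ[X]) ^ m - 1) ≠ 0 := fun m hm => by
    simpa using X_pow_sub_C_ne_zero (hw m hm) (1 : ℂ)
  have hne : ∀ m ∈ w, ((X : ℂ[X]) ^ m - 1) ^ (e m) ≠ 0 :=
    fun m hm => pow_ne_zero _ (hX m hm)
  rw [roots_prod _ _ (Finset.prod_ne_zero_iff.mpr hne), Multiset.map_bind, Multiset.sum_bind]
  rw [← Finset.sum_eq_multiset_sum w
    (fun m => (Multiset.map (fun x => x ^ k) (((X:ℂ[X]) ^ m - 1) ^ e m).roots).sum)]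
  refine Finset.sum_congr rfl fun m hm => ?_
  rw [roots_pow, Multiset.map_nsmul, Multiset.sum_nsmul]
  have h1 : ((X : ℂ[X]) ^ m - 1).roots = nthRoots m (1 : ℂ) := by
    rw [nthRoots, map_one]
  rw [h1, auxSumPowNthRoots m k (hw m hm), nsmul_eq_mul]

end Aux

/-- If `c` is an automorphism of a finite-dimensional complex vector space whose
characteristic polynomial is `∏_{m>0} (λ^m - 1)^{χ m}`, then for every `k ≥ 1`,
`tr(c^k) = ∑_{m ∣ k} m·χ m`. -/
theorem trace_pow_of_frameShape_charpoly
    (V : Type*) [AddCommGroup V] [Module ℂ V] [Module.Finite ℂ V] [Module.Free ℂ V]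
    (c : Module.End ℂ V) (hc : IsUnit c)
    (s : Finset ℕ) (hs : ∀ m ∈ s, 0 < m) (χ : ℕ → ℤ)
    (hχ : algebraMap (Polynomial ℂ) (RatFunc ℂ) (LinearMap.charpoly c)
      = ∏ m ∈ s, (RatFunc.X ^ m - 1) ^ χ m)
    (k : ℕ) (hk : 1 ≤ k) :
    LinearMap.trace ℂ V (c ^ k) = ∑ m ∈ s.filter (fun m => m ∣ k), (m : ℂ) * (χ m : ℂ) := by
  classical
  set P := LinearMap.charpoly c with hP
  set A := ∏ m ∈ s.filter (fun m => 0 ≤ χ m), ((X : ℂ[X]) ^ m - 1) ^ (χ m).toNat with hA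
  set B := ∏ m ∈ s.filter (fun m => ¬ 0 ≤ χ m), ((X : ℂ[X]) ^ m - 1) ^ (-χ m).toNat with hB
  have hg0 : ∀ m ∈ s, (RatFunc.X ^ m - 1 : RatFunc ℂ) ≠ 0 := by
    intro m hm
    have h1 : (RatFunc.X ^ m - 1 : RatFunc ℂ)
        = algebraMap (Polynomial ℂ) (RatFunc ℂ) ((X : ℂ[X]) ^ m - 1) := by
      simp [RatFunc.algebraMap_X]
    rw [h1, ne_eq, map_eq_zero_iff _ (RatFunc.algebraMap_injective ℂ)]
    simpa using X_pow_sub_C_ne_zero (hs m hm) (1 : ℂ)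
  have key : P * B = A := by
    apply RatFunc.algebraMap_injective ℂ
    rw [map_mul, hχ, hB, hA, map_prod, map_prod]
    simp only [map_pow, map_sub, map_one, RatFunc.algebraMap_X]
    rw [← Finset.prod_filter_mul_prod_filter_not s (fun m => 0 ≤ χ m)]
    have ht : ∀ m ∈ s.filter (fun m => 0 ≤ χ m),
        (RatFunc.X ^ m - 1 : RatFunc ℂ) ^ χ m = (RatFunc.X ^ m - 1) ^ (χ m).toNat := by
      intro m hm
      rw [← Int.toNat_of_nonneg (Finset.mem_filter.mp hm).2, zpow_natCast, Int.toNat_of_nonneg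
        (Finset.mem_filter.mp hm).2]
    have hu : ∀ m ∈ s.filter (fun m => ¬ 0 ≤ χ m),
        (RatFunc.X ^ m - 1 : RatFunc ℂ) ^ χ m = ((RatFunc.X ^ m - 1) ^ (-χ m).toNat)⁻¹ := by
      intro m hm
      have h2 : χ m = -(((-χ m).toNat : ℤ)) := by
        have := (Finset.mem_filter.mp hm).2
        omega
      conv_lhs => rw [h2]
      rw [zpow_neg, zpow_natCast]
    have hQ : (∏ x ∈ s.filter (fun m => ¬ 0 ≤ χ m),
        (RatFunc.X ^ x - 1 : RatFunc ℂ) ^ (-χ x).toNat) ≠ 0 :=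
      Finset.prod_ne_zero_iff.mpr fun m hm => pow_ne_zero _ (hg0 m (Finset.mem_filter.mp hm).1)
    rw [Finset.prod_congr rfl ht, Finset.prod_congr rfl hu, Finset.prod_inv_distrib,
      mul_assoc,
      mul_comm (∏ x ∈ s.filter (fun m => 0 ≤ χ m), (RatFunc.X ^ x - 1 : RatFunc ℂ) ^ (χ x).toNat),
      inv_mul_cancel₀ hQ, one_mul]
  -- pass to root sums
  have hPne : P ≠ 0 := (LinearMap.charpoly_monic c).ne_zero
  have hXne : ∀ m ∈ s, ((X : ℂ[X]) ^ m - 1) ≠ 0 := fun m hm => by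
    simpa using X_pow_sub_C_ne_zero (hs m hm) (1 : ℂ)
  have hBne : B ≠ 0 := Finset.prod_ne_zero_iff.mpr
    fun m hm => pow_ne_zero _ (hXne m (Finset.mem_filter.mp hm).1)
  have hroots : P.roots + B.roots = A.roots := by
    rw [← roots_mul (mul_ne_zero hPne hBne), key]
  have hsum := congrArg (fun M : Multiset ℂ => ((M.map (· ^ k)).sum)) hroots
  simp only [Multiset.map_add, Multiset.sum_add] at hsum
  rw [hA, auxSumPowRootsProd (s.filter (fun m => 0 ≤ χ m))
    (fun m hm => hs m (Finset.mem_filter.mp hm).1) (fun m => (χ m).toNat) k] at hsum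
  rw [hB, auxSumPowRootsProd (s.filter (fun m => ¬ 0 ≤ χ m))
    (fun m hm => hs m (Finset.mem_filter.mp hm).1) (fun m => (-χ m).toNat) k] at hsum
  have htrace : LinearMap.trace ℂ V (c ^ k) = ((P.roots).map (· ^ k)).sum :=
    auxTracePowEqSumRoots c k
  rw [htrace, eq_sub_of_add_eq hsum]
  -- identify toNat casts
  have e1 : ∑ m ∈ s.filter (fun m => 0 ≤ χ m),
      (((χ m).toNat : ℂ)) * (if m ∣ k then (m : ℂ) else 0)
      = ∑ m ∈ s.filter (fun m => 0 ≤ χ m), ((χ m : ℂ)) * (if m ∣ k then (m : ℂ) else 0) := by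
    refine Finset.sum_congr rfl fun m hm => ?_
    have h2 := (Finset.mem_filter.mp hm).2
    congr 1
    rw [← Int.cast_natCast, Int.toNat_of_nonneg h2]
  have e2 : ∑ m ∈ s.filter (fun m => ¬ 0 ≤ χ m),
      (((-χ m).toNat : ℂ)) * (if m ∣ k then (m : ℂ) else 0)
      = ∑ m ∈ s.filter (fun m => ¬ 0 ≤ χ m), (-(χ m : ℂ)) * (if m ∣ k then (m : ℂ) else 0) := by
    refine Finset.sum_congr rfl fun m hm => ?_
    have h2 := (Finset.mem_filter.mp hm).2
    congr 1
    rw [← Int.cast_natCast, Int.toNat_of_nonneg (by omega : (0:ℤ) ≤ -χ m), Int.cast_neg]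
  rw [e1, e2]
  rw [show ∑ m ∈ s.filter (fun m => ¬ 0 ≤ χ m), (-(χ m : ℂ)) * (if m ∣ k then (m : ℂ) else 0)
      = - ∑ m ∈ s.filter (fun m => ¬ 0 ≤ χ m), ((χ m : ℂ)) * (if m ∣ k then (m : ℂ) else 0) by
    rw [← Finset.sum_neg_distrib]
    exact Finset.sum_congr rfl fun m hm => by ring]
  rw [sub_neg_eq_add, Finset.sum_filter_add_sum_filter_not]
  simp only [mul_ite, mul_zero]
  rw [← Finset.sum_filter]
  exact Finset.sum_congr rfl fun m hm => mul_comm _ _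
end

section
/- For the polynomial φ(λ) = (λ^2-1)(λ^3-1)(λ^7-1)(λ^{42}-1) / ((λ-1)(λ^6-1)(λ^{14}-1)(λ^{21}-1)) (the characteristic polynomial of the monodromy of the singularity E₁₂), the Saito dual φ* with respect to h = 42 equals φ itself; in particular E₁₂ is Saito self-dual. -/
open RatFunc

/-- The Saito dual of a Frame shape of order `h`: `χ*_k = -χ_{h/k}`. -/
def saitoDual (h : ℕ) (χ : ℕ → ℤ) : ℕ → ℤ := fun k => -χ (h / k)

/-- The Frame shape `2·3·7·42 / 1·6·14·21` of the singularity `E₁₂`. -/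
def chiE12 : ℕ → ℤ := fun m =>
  if m ∈ ([2, 3, 7, 42] : List ℕ) then 1
  else if m ∈ ([1, 6, 14, 21] : List ℕ) then -1 else 0

/-- The characteristic polynomial of the monodromy of `E₁₂` is Saito self-dual with
respect to `h = 42`: the dual exponents coincide with the original ones, and the dual
rational function `φ*` equals `φ`. -/
theorem E12_saito_self_dual :
    (∀ k ∈ Nat.divisors 42, saitoDual 42 chiE12 k = chiE12 k) ∧
    (∏ m ∈ Nat.divisors 42, ((RatFunc.X : RatFunc ℚ) ^ m - 1) ^ saitoDual 42 chiE12 m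
      = ∏ m ∈ Nat.divisors 42, ((RatFunc.X : RatFunc ℚ) ^ m - 1) ^ chiE12 m) := by
  have h1 : ∀ k ∈ Nat.divisors 42, saitoDual 42 chiE12 k = chiE12 k := by decide
  exact ⟨h1, Finset.prod_congr rfl fun m hm => by rw [h1 m hm]⟩
end
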